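/- For distinct real numbers t₁,...,tₙ in (-1,1), with qᵢ(t) = (1-tᵢ²)⁻¹ ∏_{k≠i} (tᵢ-t_k)/(1-tᵢt_k), one has q₁(t)⋯qₙ(t) = (-1)^{n(n-1)/2} det((1/(1-tᵢtⱼ))ᵢⱼ). -/

import Mathlib

open Finset Matrix

private lemma det_col_ops {n : ℕ} {A B : Matrix (Fin n) (Fin n) ℝ} (c : Fin n → ℝ) (k : Fin n)
    (hk : c k = 0) (h : ∀ i j, A i j = B i j + c j * B i k) : A.det = B.det := by
  rw [← Matrix.det_transpose A, ← Matrix.det_transpose B]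
  exact Matrix.det_eq_of_forall_row_eq_smul_add_const c k hk fun i j => h j i

private lemma cauchy_det : ∀ (n : ℕ) (t : Fin n → ℝ), (∀ i j, (1:ℝ) - t i * t j ≠ 0) →
    Matrix.det (Matrix.of fun i j => (1 - t i * t j)⁻¹)
      = (∏ i, ∏ j ∈ Finset.Ioi i, (t i - t j)^2) * ∏ i, ∏ j, (1 - t i * t j)⁻¹ := by
  intro n
  induction n with
  | zero => intro t h; simp
  | succ n ih =>
    intro t h
    set a := t 0 with ha
    have h0 : ∀ i, (1:ℝ) - t i * a ≠ 0 := fun i => h i 0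
    have h0' : ∀ j, (1:ℝ) - a * t j ≠ 0 := fun j => h 0 j
    have step1 : Matrix.det (Matrix.of fun i j : Fin (n+1) => (1 - t i * t j)⁻¹)
        = Matrix.det (Matrix.of fun i j : Fin (n+1) =>
            (1 - a * t j)⁻¹ * ((if i = 0 then 1 else t i - a) *
              (if i = 0 then 1 else t j * (1 - t i * t j)⁻¹))) := by
      apply Matrix.det_eq_of_forall_row_eq_smul_add_const
        (fun i => if i = 0 then (0:ℝ) else 1) 0 (by simp)
      intro i j
      simp only [Matrix.of_apply]
      by_cases hi : i = 0
      · simp [hi, ha]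
      · simp only [if_neg hi, if_pos rfl, mul_one, ↓reduceIte]
        have h1 := h i j
        have h2 := h0' j
        rw [ha] at h2 ⊢
        have h3 : 1 - t j * t 0 ≠ 0 := by rwa [mul_comm]
        field_simp
        ring
    have step2 : Matrix.det (Matrix.of fun i j : Fin (n+1) =>
            (1 - a * t j)⁻¹ * ((if i = 0 then 1 else t i - a) *
              (if i = 0 then 1 else t j * (1 - t i * t j)⁻¹)))
        = (∏ j, (1 - a * t j)⁻¹) * Matrix.det (Matrix.of fun i j : Fin (n+1) =>
            (if i = 0 then 1 else t i - a) *
              (if i = 0 then 1 else t j * (1 - t i * t j)⁻¹)) :=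
      Matrix.det_mul_row _ _
    have step3 : Matrix.det (Matrix.of fun i j : Fin (n+1) =>
            (if i = 0 then (1:ℝ) else t i - a) *
              (if i = 0 then 1 else t j * (1 - t i * t j)⁻¹))
        = (∏ i, (if i = 0 then (1:ℝ) else t i - a)) * Matrix.det (Matrix.of fun i j : Fin (n+1) =>
            (if i = 0 then (1:ℝ) else t j * (1 - t i * t j)⁻¹)) :=
      Matrix.det_mul_column _ _
    have step4 : Matrix.det (Matrix.of fun i j : Fin (n+1) =>
            (if i = 0 then (1:ℝ) else t j * (1 - t i * t j)⁻¹))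
        = Matrix.det (Matrix.of fun i j : Fin (n+1) =>
            (if i = 0 then 1 else (1 - t i * a)⁻¹) *
              ((if j = 0 then 1 else t j - a) *
                (if i = 0 then (if j = 0 then (1:ℝ) else 0)
                 else if j = 0 then a else (1 - t i * t j)⁻¹))) := by
      apply det_col_ops (fun j => if j = 0 then (0:ℝ) else 1) 0 (by simp)
      intro i j
      simp only [Matrix.of_apply]
      by_cases hi : i = 0
      · by_cases hj : j = 0 <;> simp [hi, hj]
      · by_cases hj : j = 0
        · subst hj
          rw [← ha]
          simp only [if_pos rfl, if_neg hi, ite_true, ite_false, eq_self_iff_true,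
            mul_one, mul_zero, add_zero, one_mul]
          ring
        · simp only [if_neg hi, if_neg hj, mul_one, one_mul, ↓reduceIte]
          have h1 := h i j
          have h2 := h0 i
          rw [ha] at h2 ⊢
          have h3 : 1 - t j * t i ≠ 0 := by rwa [mul_comm]
          field_simp
          ring
    have step5 : Matrix.det (Matrix.of fun i j : Fin (n+1) =>
            (if i = 0 then (1:ℝ) else (1 - t i * a)⁻¹) *
              ((if j = 0 then 1 else t j - a) *
                (if i = 0 then (if j = 0 then (1:ℝ) else 0)
                 else if j = 0 then a else (1 - t i * t j)⁻¹)))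
        = (∏ i, (if i = 0 then (1:ℝ) else (1 - t i * a)⁻¹)) *
            Matrix.det (Matrix.of fun i j : Fin (n+1) =>
              (if j = 0 then (1:ℝ) else t j - a) *
                (if i = 0 then (if j = 0 then (1:ℝ) else 0)
                 else if j = 0 then a else (1 - t i * t j)⁻¹)) :=
      Matrix.det_mul_column _ _
    have step6 : Matrix.det (Matrix.of fun i j : Fin (n+1) =>
              (if j = 0 then (1:ℝ) else t j - a) *
                (if i = 0 then (if j = 0 then (1:ℝ) else 0)
                 else if j = 0 then a else (1 - t i * t j)⁻¹))
        = (∏ j, (if j = 0 then (1:ℝ) else t j - a)) *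
            Matrix.det (Matrix.of fun i j : Fin (n+1) =>
                (if i = 0 then (if j = 0 then (1:ℝ) else 0)
                 else if j = 0 then a else (1 - t i * t j)⁻¹)) :=
      Matrix.det_mul_row _ _
    have step7 : Matrix.det (Matrix.of fun i j : Fin (n+1) =>
                (if i = 0 then (if j = 0 then (1:ℝ) else 0)
                 else if j = 0 then a else (1 - t i * t j)⁻¹))
        = Matrix.det (Matrix.of fun i j : Fin n => (1 - t i.succ * t j.succ)⁻¹) := by
      rw [Matrix.det_succ_row_zero]
      rw [Finset.sum_eq_single 0]
      · have hsub : ((Matrix.of fun i j : Fin (n+1) =>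
                (if i = 0 then (if j = 0 then (1:ℝ) else 0)
                 else if j = 0 then a else (1 - t i * t j)⁻¹)).submatrix
              Fin.succ (Fin.succAbove 0))
            = (Matrix.of fun i j : Fin n => (1 - t i.succ * t j.succ)⁻¹) := by
          ext i j
          simp [Matrix.submatrix_apply, Fin.zero_succAbove, Fin.succ_ne_zero]
        rw [hsub]
        simp
      · intro b _ hb
        simp [Matrix.of_apply, if_neg hb, hb]
      · simp
    rw [step1, step2, step3, step4, step5, step6, step7, ih (fun i => t i.succ)
      (fun i j => h i.succ j.succ)]
    -- now pure product bookkeeping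
    have pr : (∏ i : Fin (n+1), (if i = 0 then (1:ℝ) else t i - a))
        = ∏ i : Fin n, (t i.succ - a) := by
      rw [Fin.prod_univ_succ]
      simp [Fin.succ_ne_zero]
    have pr' : (∏ i : Fin (n+1), (if i = 0 then (1:ℝ) else (1 - t i * a)⁻¹))
        = ∏ i : Fin n, (1 - t i.succ * a)⁻¹ := by
      rw [Fin.prod_univ_succ]
      simp [Fin.succ_ne_zero]
    have ptgt1 : (∏ i : Fin (n+1), ∏ j ∈ Finset.Ioi i, (t i - t j)^2)
        = (∏ j : Fin n, ((a - t j.succ)^2)) *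
          ∏ i : Fin n, ∏ j ∈ Finset.Ioi i, (t i.succ - t j.succ)^2 := by
      rw [Fin.prod_univ_succ, Fin.prod_Ioi_zero]
      congr 1
      exact Finset.prod_congr rfl fun i _ => by rw [Fin.prod_Ioi_succ]
    have ptgt2 : (∏ i : Fin (n+1), ∏ j : Fin (n+1), (1 - t i * t j)⁻¹)
        = (∏ j : Fin (n+1), (1 - a * t j)⁻¹) *
          ((∏ i : Fin n, (1 - t i.succ * a)⁻¹) *
            ∏ i : Fin n, ∏ j : Fin n, (1 - t i.succ * t j.succ)⁻¹) := by
      rw [Fin.prod_univ_succ]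
      congr 1
      rw [← Finset.prod_mul_distrib]
      exact Finset.prod_congr rfl fun i _ => by rw [Fin.prod_univ_succ]
    have psq : (∏ j : Fin n, ((a - t j.succ)^2))
        = (∏ i : Fin n, (t i.succ - a)) * ∏ i : Fin n, (t i.succ - a) := by
      rw [← Finset.prod_mul_distrib]
      exact Finset.prod_congr rfl fun i _ => by ring
    rw [pr, pr', ptgt1, ptgt2, psq]
    ring


/-- ∏ᵢ qᵢ(t) = (-1)^{n(n-1)/2} det((1/(1-tᵢtⱼ))), where
qᵢ(t) = (1-tᵢ²)⁻¹ ∏_{k≠i} (tᵢ-t_k)/(1-tᵢt_k), for distinct t₁,…,tₙ ∈ (-1,1). -/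
theorem product_of_q (n : ℕ) (t : Fin n → ℝ)
    (ht : ∀ i, t i ∈ Set.Ioo (-1 : ℝ) 1) (hdist : Function.Injective t) :
    (∏ i, ((1 - t i ^ 2)⁻¹ * ∏ k ∈ Finset.univ.erase i, (t i - t k) / (1 - t i * t k)))
      = (-1 : ℝ) ^ (n * (n - 1) / 2)
        * Matrix.det (Matrix.of fun i j => (1 - t i * t j)⁻¹) := by
  have h : ∀ i j, (1:ℝ) - t i * t j ≠ 0 := by
    intro i j
    have hi1 := (ht i).1; have hi2 := (ht i).2
    have hj1 := (ht j).1; have hj2 := (ht j).2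
    nlinarith [sq_nonneg (t i - t j), sq_nonneg (t i + t j)]
  -- rewrite LHS
  have lhs_eq : (∏ i, ((1 - t i ^ 2)⁻¹ * ∏ k ∈ Finset.univ.erase i, (t i - t k) / (1 - t i * t k)))
      = (∏ i, ∏ k ∈ Finset.univ.erase i, (t i - t k)) *
        ∏ i, ∏ j, (1 - t i * t j)⁻¹ := by
    rw [← Finset.prod_mul_distrib]
    refine Finset.prod_congr rfl fun i _ => ?_
    have : ∏ k ∈ Finset.univ.erase i, (t i - t k) / (1 - t i * t k)
        = (∏ k ∈ Finset.univ.erase i, (t i - t k)) *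
          ∏ k ∈ Finset.univ.erase i, (1 - t i * t k)⁻¹ := by
      rw [← Finset.prod_mul_distrib]
      exact Finset.prod_congr rfl fun k _ => div_eq_mul_inv _ _
    rw [this]
    have huniv : (∏ j, (1 - t i * t j)⁻¹)
        = (1 - t i * t i)⁻¹ * ∏ k ∈ Finset.univ.erase i, (1 - t i * t k)⁻¹ :=
      (Finset.mul_prod_erase Finset.univ (fun j => (1 - t i * t j)⁻¹)
        (Finset.mem_univ i)).symm
    rw [huniv, sq]
    ring
  -- signed square product
  have sgn_eq : (∏ i, ∏ k ∈ Finset.univ.erase i, (t i - t k))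
      = (-1 : ℝ) ^ (n * (n - 1) / 2) * ∏ i, ∏ j ∈ Finset.Ioi i, (t i - t j) ^ 2 := by
    have key := Finset.prod_prod_Ioi_mul_eq_prod_prod_off_diag
      (fun x y : Fin n => t y - t x)
    simp only [Finset.compl_singleton] at key
    have erase_eq : (∏ i, ∏ k ∈ Finset.univ.erase i, (t i - t k))
        = ∏ i, ∏ j ∈ Finset.Ioi i, ((t i - t j) * (t j - t i)) := by
      convert key.symm using 4
    rw [erase_eq]
    have neg_eq : ∀ i : Fin n, (∏ j ∈ Finset.Ioi i, ((t i - t j) * (t j - t i)))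
        = (-1 : ℝ) ^ (Finset.Ioi i).card * ∏ j ∈ Finset.Ioi i, (t i - t j) ^ 2 := by
      intro i
      rw [← Finset.prod_const, ← Finset.prod_mul_distrib]
      exact Finset.prod_congr rfl fun j _ => by ring
    rw [Finset.prod_congr rfl fun i _ => neg_eq i, Finset.prod_mul_distrib,
      Finset.prod_pow_eq_pow_sum]
    congr 2
    -- ∑ i : Fin n, card (Ioi i) = n * (n-1) / 2
    have : ∀ i : Fin n, (Finset.Ioi i).card = n - 1 - (i : ℕ) := fun i => Fin.card_Ioi i
    simp_rw [this]
    rw [Fin.sum_univ_eq_sum_range (fun k => n - 1 - k) n, ← Finset.sum_range_reflect]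
    rw [← Finset.sum_range_id n]
    refine Finset.sum_congr rfl fun k hk => ?_
    have hk' := Finset.mem_range.mp hk
    omega
  rw [lhs_eq, sgn_eq, cauchy_det n t h]
  ring
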